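/- Let A be an I-modal ririg and X ⊆ A. The least I-filter containing X equals the up-set of the set of finite products M₁(x₁)·…·Mₙ(xₙ) where x₁,…,xₙ ∈ X and each Mᵢ is a finite composition (possibly empty) of modal operators from I. -/

import Mathlib

/-- An integral residuated rig (ririg). -/
class Ririg (A : Type*) extends CommMonoid A, SemilatticeSup A, OrderBot A, OrderTop A, HImp A where
  one_eq_top : (1 : A) = ⊤
  mul_sup : ∀ x y z : A, x * (y ⊔ z) = x * y ⊔ x * z
  mul_bot : ∀ x : A, x * ⊥ = ⊥
  residuation : ∀ a b c : A, a * b ≤ c ↔ a ≤ b ⇨ c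

/-- A modal operator on a ririg. -/
def IsModal {A : Type*} [Ririg A] (m : A → A) : Prop :=
  m 1 = 1 ∧ ∀ x y : A, m (x ⇨ y) ≤ m x ⇨ m y

/-- Interpretation of an I-block (finite composition of modal operators). -/
def blockApp {A ι : Type*} (f : ι → A → A) : List ι → A → A
  | [] => id
  | i :: L => f i ∘ blockApp f L

/-- I-filter. -/
def IsIFilter {A ι : Type*} [Ririg A] (f : ι → A → A) (F : Set A) : Prop :=
  F.Nonempty ∧ (∀ x y : A, x ∈ F → x ≤ y → y ∈ F) ∧
    (∀ x y : A, x ∈ F → y ∈ F → x * y ∈ F) ∧ (∀ i : ι, ∀ x : A, x ∈ F → f i x ∈ F)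

/-- Congruence of an I-modal ririg. -/
def IsRirigCon {A ι : Type*} [Ririg A] (f : ι → A → A) (θ : A → A → Prop) : Prop :=
  Equivalence θ ∧
    (∀ a b c d : A, θ a b → θ c d → θ (a ⊔ c) (b ⊔ d)) ∧
    (∀ a b c d : A, θ a b → θ c d → θ (a * c) (b * d)) ∧
    (∀ a b c d : A, θ a b → θ c d → θ (a ⇨ c) (b ⇨ d)) ∧
    (∀ i : ι, ∀ a b : A, θ a b → θ (f i a) (f i b))


section Aux
variable {A : Type*} [Ririg A]

private lemma ririg_le_one (x : A) : x ≤ 1 := le_of_le_of_eq le_top Ririg.one_eq_top.symm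

private lemma ririg_mul_le_left {x y : A} (h : x ≤ y) (z : A) : x * z ≤ y * z :=
  (Ririg.residuation x z (y * z)).mpr (h.trans ((Ririg.residuation y z (y * z)).mp le_rfl))

private lemma ririg_mul_le {a b c d : A} (h1 : a ≤ b) (h2 : c ≤ d) : a * c ≤ b * d := by
  calc a * c ≤ b * c := ririg_mul_le_left h1 c
    _ = c * b := mul_comm _ _
    _ ≤ d * b := ririg_mul_le_left h2 b
    _ = b * d := mul_comm _ _

private lemma modal_mono {m : A → A} (hm : IsModal m) {x y : A} (h : x ≤ y) : m x ≤ m y := by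
  have h1 : (x ⇨ y) = 1 := le_antisymm (ririg_le_one _)
    ((Ririg.residuation 1 x y).mp (by simpa using h))
  have h2 : (1 : A) ≤ m x ⇨ m y := by
    have := hm.2 x y
    rw [h1, hm.1] at this
    exact this
  have := (Ririg.residuation 1 (m x) (m y)).mpr h2
  simpa using this

private lemma modal_submul {m : A → A} (hm : IsModal m) (x y : A) : m x * m y ≤ m (x * y) := by
  have h1 : x ≤ y ⇨ x * y := (Ririg.residuation x y (x * y)).mp le_rfl
  have h2 : m x ≤ m y ⇨ m (x * y) := (modal_mono hm h1).trans (hm.2 y (x * y))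
  exact (Ririg.residuation (m x) (m y) (m (x * y))).mpr h2

private lemma modal_prod {m : A → A} (hm : IsModal m) (l : List A) :
    (l.map m).prod ≤ m l.prod := by
  induction l with
  | nil => simp [hm.1]
  | cons a l ih =>
      simp only [List.map_cons, List.prod_cons]
      exact (ririg_mul_le le_rfl ih).trans (modal_submul hm a l.prod)

end Aux

theorem stmt10 {A ι : Type*} [Ririg A] (f : ι → A → A) (hf : ∀ i, IsModal (f i))
    (X : Set A) :
    IsLeast {F : Set A | IsIFilter f F ∧ X ⊆ F}
      {y : A | ∃ L : List (List ι × A), (∀ p ∈ L, p.2 ∈ X) ∧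
        (L.map (fun p => blockApp f p.1 p.2)).prod ≤ y} := by
  set g : List ι × A → A := fun p => blockApp f p.1 p.2 with hg
  set S : Set A := {y : A | ∃ L : List (List ι × A), (∀ p ∈ L, p.2 ∈ X) ∧
        (L.map g).prod ≤ y} with hS
  constructor
  · constructor
    · refine ⟨⟨1, ⟨[], by simp⟩⟩, ?_, ?_, ?_⟩
      · rintro x y ⟨L, hL, hle⟩ hxy
        exact ⟨L, hL, hle.trans hxy⟩
      · rintro x y ⟨L1, h1, hle1⟩ ⟨L2, h2, hle2⟩
        refine ⟨L1 ++ L2, ?_, ?_⟩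
        · intro p hp
          rcases List.mem_append.mp hp with h | h
          · exact h1 p h
          · exact h2 p h
        · rw [List.map_append, List.prod_append]
          exact ririg_mul_le hle1 hle2
      · rintro i x ⟨L, hL, hle⟩
        refine ⟨L.map (fun p => (i :: p.1, p.2)), ?_, ?_⟩
        · intro p hp
          rcases List.mem_map.mp hp with ⟨q, hq, rfl⟩
          exact hL q hq
        · have heq : (L.map (fun p => (i :: p.1, p.2))).map g = (L.map g).map (f i) := by
            simp [hg, List.map_map, Function.comp_def, blockApp]
          rw [heq]
          exact (modal_prod (hf i) (L.map g)).trans (modal_mono (hf i) hle)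
    · intro x hx
      exact ⟨[([], x)], by simpa using hx, by simp [hg, blockApp]⟩
  · rintro F ⟨⟨⟨a, ha⟩, hup, hmul, hmod⟩, hX⟩
    rintro y ⟨L, hL, hle⟩
    have hone : (1 : A) ∈ F := hup a 1 ha (ririg_le_one a)
    have hblock : ∀ (M : List ι) (x : A), x ∈ F → blockApp f M x ∈ F := by
      intro M
      induction M with
      | nil => intro x hx; exact hx
      | cons i M ih => intro x hx; exact hmod i _ (ih x hx)
    have hprod : (L.map g).prod ∈ F := by
      clear hle
      induction L with
      | nil => simpa using hone
      | cons p L ih =>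
          have hpF : g p ∈ F := hblock p.1 p.2 (hX (hL p List.mem_cons_self))
          have ihF := ih (fun q hq => hL q (List.mem_cons_of_mem p hq))
          simpa using hmul _ _ hpF ihF
    exact hup _ y hprod hle
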